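/- Let m ≥ 1 and let A : ℝ^m → ℝ^n be a linear map with operator norm ‖A‖ (its largest singular value), and let E be uniformly distributed on the unit sphere S^{m−1} ⊂ ℝ^m. Then (1/m)·‖A‖ ≤ E[‖AE‖₂], i.e. the worst-case condition of A is at most m times its stochastic condition. -/

import Mathlib

open MeasureTheory

/-- the worst-case condition of a linear map is at most `m` times its
stochastic condition: if `E` is uniformly distributed on the unit sphere `S^{m-1} ⊂ ℝ^m`
(uniformity being characterised by invariance under all linear isometries), then
`(1/m)‖A‖ ≤ 𝔼[‖A E‖₂]`. -/
theorem worst_case_le_m_times_stochastic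
    {m n : ℕ} (hm : 1 ≤ m)
    (A : EuclideanSpace ℝ (Fin m) →L[ℝ] EuclideanSpace ℝ (Fin n))
    {Ω : Type} [MeasurableSpace Ω] (ℙ : Measure Ω) [IsProbabilityMeasure ℙ]
    (E : Ω → EuclideanSpace ℝ (Fin m)) (hmeas : Measurable E)
    (hsphere : ∀ ω, ‖E ω‖ = 1)
    (hinv : ∀ g : EuclideanSpace ℝ (Fin m) ≃ₗᵢ[ℝ] EuclideanSpace ℝ (Fin m),
      Measure.map (fun ω => g (E ω)) ℙ = Measure.map E ℙ) :
    (1 / (m : ℝ)) * ‖A‖ ≤ ∫ ω, ‖A (E ω)‖ ∂ℙ := by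
  have hm' : (0 : ℝ) < m := by exact_mod_cast hm
  -- integrability of bounded continuous functionals of E
  have hint : ∀ (f : EuclideanSpace ℝ (Fin m) → ℝ), Continuous f → ∀ C : ℝ,
      (∀ ω, |f (E ω)| ≤ C) → Integrable (fun ω => f (E ω)) ℙ := by
    intro f hf C hC
    refine ⟨(hf.measurable.comp hmeas).aestronglyMeasurable, ?_⟩
    exact HasFiniteIntegral.of_bounded (C := C)
      (Filter.Eventually.of_forall (by simpa [Real.norm_eq_abs] using hC))
  -- change of variables by a linear isometry
  have hchg : ∀ (g : EuclideanSpace ℝ (Fin m) ≃ₗᵢ[ℝ] EuclideanSpace ℝ (Fin m))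
      (f : EuclideanSpace ℝ (Fin m) → ℝ), Continuous f →
      ∫ ω, f (g (E ω)) ∂ℙ = ∫ ω, f (E ω) ∂ℙ := by
    intro g f hf
    have h1 : AEMeasurable (fun ω => g (E ω)) ℙ :=
      (g.continuous.measurable.comp hmeas).aemeasurable
    rw [← integral_map h1 hf.aestronglyMeasurable, hinv g,
      integral_map hmeas.aemeasurable hf.aestronglyMeasurable]
  -- the distribution of ⟪v, E⟫ does not depend on the unit vector v
  have hveq : ∀ (v w : EuclideanSpace ℝ (Fin m)), ‖v‖ = 1 → ‖w‖ = 1 →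
      ∀ (φ : ℝ → ℝ), Continuous φ →
      ∫ ω, φ ((inner ℝ v (E ω) : ℝ)) ∂ℙ = ∫ ω, φ ((inner ℝ w (E ω) : ℝ)) ∂ℙ := by
    intro v w hv hw φ hφ
    set g : EuclideanSpace ℝ (Fin m) ≃ₗᵢ[ℝ] EuclideanSpace ℝ (Fin m) :=
      Submodule.reflection (ℝ ∙ (v - w))ᗮ with hgdef
    have hg : g v = w := Submodule.reflection_sub (by rw [hv, hw])
    have hcont : Continuous fun x : EuclideanSpace ℝ (Fin m) => φ ((inner ℝ w x : ℝ)) :=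
      hφ.comp (Continuous.inner continuous_const continuous_id)
    have key : ∀ ω, (inner ℝ v (E ω) : ℝ) = inner ℝ w (g (E ω)) := by
      intro ω
      rw [← hg, LinearIsometryEquiv.inner_map_map]
    calc ∫ ω, φ ((inner ℝ v (E ω) : ℝ)) ∂ℙ
        = ∫ ω, (fun x => φ ((inner ℝ w x : ℝ))) (g (E ω)) ∂ℙ := by
          simp only [← key]
      _ = ∫ ω, φ ((inner ℝ w (E ω) : ℝ)) ∂ℙ := hchg g _ hcont
  have i0 : Fin m := ⟨0, hm⟩
  -- coordinates as inner ℝ products with unit vectors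
  have hsingle : ∀ (i : Fin m) (x : EuclideanSpace ℝ (Fin m)),
      (inner ℝ (EuclideanSpace.single i (1 : ℝ)) x : ℝ) = x i := by
    intro i x
    simp [EuclideanSpace.inner_single_left]
  have hsingle_norm : ∀ i : Fin m, ‖EuclideanSpace.single i (1 : ℝ)‖ = 1 := by
    intro i; simp [EuclideanSpace.norm_single]
  -- sum of squared coordinates is 1
  have hsum : ∀ ω, ∑ i, (E ω i) ^ 2 = 1 := by
    intro ω
    have h := hsphere ω
    rw [EuclideanSpace.norm_eq] at h
    have h2 : ∑ i, ‖E ω i‖ ^ 2 = 1 := Real.sqrt_eq_one.mp h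
    simpa [Real.norm_eq_abs, sq_abs] using h2
  have hcoordsq_le : ∀ ω (i : Fin m), (E ω i) ^ 2 ≤ 1 := by
    intro ω i
    calc (E ω i) ^ 2 ≤ ∑ j, (E ω j) ^ 2 :=
          Finset.single_le_sum (fun j _ => sq_nonneg (E ω j)) (Finset.mem_univ i)
      _ = 1 := hsum ω
  have hcoord_le : ∀ ω (i : Fin m), |E ω i| ≤ 1 := fun ω i =>
    abs_le_one_iff_mul_self_le_one.mpr (by simpa [sq] using hcoordsq_le ω i)
  -- integrability of squared coordinates
  have hintsq : ∀ i : Fin m, Integrable (fun ω => (E ω i) ^ 2) ℙ := by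
    intro i
    refine hint (fun x => (x i) ^ 2) ?_ 1 (fun ω => by
      rw [abs_of_nonneg (sq_nonneg _)]; exact hcoordsq_le ω i)
    exact (PiLp.continuous_apply 2 _ i).pow 2
  -- each coordinate has the same second moment, summing to 1
  have hsqsum : ∑ i : Fin m, ∫ ω, (E ω i) ^ 2 ∂ℙ = 1 := by
    rw [← integral_finset_sum _ (fun i _ => hintsq i)]
    simp [hsum]
  have hsqeq : ∀ i : Fin m, ∫ ω, (E ω i) ^ 2 ∂ℙ = ∫ ω, (E ω i0) ^ 2 ∂ℙ := by
    intro i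
    have := hveq (EuclideanSpace.single i (1 : ℝ)) (EuclideanSpace.single i0 (1 : ℝ))
      (hsingle_norm i) (hsingle_norm i0) (fun t => t ^ 2) (continuous_pow 2)
    simpa [hsingle] using this
  have hsq0 : ∫ ω, (E ω i0) ^ 2 ∂ℙ = 1 / m := by
    have : (m : ℝ) * ∫ ω, (E ω i0) ^ 2 ∂ℙ = 1 := by
      rw [← hsqsum]
      simp [hsqeq, Finset.sum_const, nsmul_eq_mul]
    field_simp
    linarith [this]
  -- first absolute moment of a coordinate is at least 1/m
  have habs0 : 1 / (m : ℝ) ≤ ∫ ω, |E ω i0| ∂ℙ := by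
    rw [← hsq0]
    refine integral_mono (hintsq i0)
      (hint (fun x => |x i0|) ((PiLp.continuous_apply 2 _ i0).abs) 1
        (fun ω => by rw [abs_abs]; exact hcoord_le ω i0)) ?_
    intro ω
    have h1 : |E ω i0| ≤ 1 := hcoord_le ω i0
    have h2 : (E ω i0) ^ 2 = |E ω i0| * |E ω i0| := by rw [← abs_mul, abs_mul_self, sq]
    calc (E ω i0) ^ 2 = |E ω i0| * |E ω i0| := h2
      _ ≤ |E ω i0| * 1 := mul_le_mul_of_nonneg_left h1 (abs_nonneg _)
      _ = |E ω i0| := mul_one _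
  -- key: for any unit vector v, ∫ |⟪v, E⟫| ≥ 1/m
  have hkey : ∀ v : EuclideanSpace ℝ (Fin m), ‖v‖ = 1 →
      1 / (m : ℝ) ≤ ∫ ω, |(inner ℝ v (E ω) : ℝ)| ∂ℙ := by
    intro v hv
    have := hveq v (EuclideanSpace.single i0 (1 : ℝ)) hv (hsingle_norm i0)
      (fun t => |t|) continuous_abs
    rw [this]
    simpa [hsingle] using habs0
  -- integrability of ω ↦ ‖A (E ω)‖
  have hintA : Integrable (fun ω => ‖A (E ω)‖) ℙ := by
    refine hint (fun x => ‖A x‖) (A.continuous.norm) ‖A‖ (fun ω => ?_)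
    rw [abs_of_nonneg (norm_nonneg _)]
    calc ‖A (E ω)‖ ≤ ‖A‖ * ‖E ω‖ := A.le_opNorm (E ω)
      _ = ‖A‖ := by rw [hsphere ω, mul_one]
  have hI0 : 0 ≤ ∫ ω, ‖A (E ω)‖ ∂ℙ := integral_nonneg fun ω => norm_nonneg _
  rcases le_or_gt ‖A‖ 0 with hA0 | hA0
  · have : (1 / (m : ℝ)) * ‖A‖ ≤ 0 :=
      mul_nonpos_of_nonneg_of_nonpos (by positivity) hA0
    linarith
  · rw [div_mul_eq_mul_div, one_mul, div_le_iff₀ hm']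
    refine le_of_forall_lt fun r hr => ?_
    rcases lt_or_ge r 0 with hr0 | hr0
    · exact hr0.trans_le (by positivity)
    have hr' : r < ‖ContinuousLinearMap.adjoint A‖ := by
      rwa [ContinuousLinearMap.adjoint.norm_map A]
    obtain ⟨x, hx1, hx2⟩ := (ContinuousLinearMap.adjoint A).exists_lt_apply_of_lt_opNorm hr'
    have hx0 : x ≠ 0 := by
      rintro rfl
      simp only [map_zero, norm_zero] at hx2
      linarith
    set u := ‖x‖⁻¹ • x with hudef
    have hu : ‖u‖ = 1 := norm_smul_inv_norm hx0
    set w := ContinuousLinearMap.adjoint A u with hwdef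
    have hw_big : r < ‖w‖ := by
      have hxpos : 0 < ‖x‖ := norm_pos_iff.mpr hx0
      have h1 : (1 : ℝ) ≤ ‖x‖⁻¹ := (one_le_inv₀ hxpos).mpr hx1.le
      have : ‖w‖ = ‖x‖⁻¹ * ‖ContinuousLinearMap.adjoint A x‖ := by
        rw [hwdef, hudef, _root_.map_smul, norm_smul, norm_inv, norm_norm]
      rw [this]
      calc r < ‖ContinuousLinearMap.adjoint A x‖ := hx2
        _ = 1 * ‖ContinuousLinearMap.adjoint A x‖ := (one_mul _).symm
        _ ≤ ‖x‖⁻¹ * ‖ContinuousLinearMap.adjoint A x‖ :=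
          mul_le_mul_of_nonneg_right h1 (norm_nonneg _)
    have hw0 : w ≠ 0 := by
      intro h
      rw [h, norm_zero] at hw_big
      linarith
    have hwpos : 0 < ‖w‖ := norm_pos_iff.mpr hw0
    set v := ‖w‖⁻¹ • w with hvdef
    have hv : ‖v‖ = 1 := norm_smul_inv_norm hw0
    -- pointwise bound
    have hpt : ∀ ω, ‖w‖ * |(inner ℝ v (E ω) : ℝ)| ≤ ‖A (E ω)‖ := by
      intro ω
      have h1 : (inner ℝ v (E ω) : ℝ) = ‖w‖⁻¹ * inner ℝ w (E ω) := by
        rw [hvdef, real_inner_smul_left]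
      have h2 : (inner ℝ w (E ω) : ℝ) = inner ℝ u (A (E ω)) :=
        ContinuousLinearMap.adjoint_inner_left A (E ω) u
      have h3 : |(inner ℝ u (A (E ω)) : ℝ)| ≤ ‖A (E ω)‖ := by
        calc |(inner ℝ u (A (E ω)) : ℝ)| ≤ ‖u‖ * ‖A (E ω)‖ := abs_real_inner_le_norm u _
          _ = ‖A (E ω)‖ := by rw [hu, one_mul]
      have h4 : ‖w‖ * |(inner ℝ v (E ω) : ℝ)| = |(inner ℝ w (E ω) : ℝ)| := by
        rw [h1, abs_mul, abs_of_nonneg (inv_nonneg.mpr (norm_nonneg w)), ← mul_assoc,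
          mul_inv_cancel₀ (ne_of_gt hwpos), one_mul]
      rw [h4, h2]
      exact h3
    -- integrate the pointwise bound
    have hintv : Integrable (fun ω => |(inner ℝ v (E ω) : ℝ)|) ℙ := by
      refine hint (fun x => |(inner ℝ v x : ℝ)|)
        ((Continuous.inner continuous_const continuous_id).abs) 1 (fun ω => ?_)
      rw [abs_abs]
      calc |(inner ℝ v (E ω) : ℝ)| ≤ ‖v‖ * ‖E ω‖ := abs_real_inner_le_norm v _
        _ = 1 := by rw [hv, hsphere ω, one_mul]
    have hmono : ∫ ω, ‖w‖ * |(inner ℝ v (E ω) : ℝ)| ∂ℙ ≤ ∫ ω, ‖A (E ω)‖ ∂ℙ :=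
      integral_mono (hintv.const_mul ‖w‖) hintA hpt
    rw [integral_const_mul] at hmono
    have hkv := hkey v hv
    calc r < ‖w‖ := hw_big
      _ = ‖w‖ * ((1 / (m : ℝ)) * m) := by field_simp
      _ = (‖w‖ * (1 / (m : ℝ))) * m := by ring
      _ ≤ (‖w‖ * ∫ ω, |(inner ℝ v (E ω) : ℝ)| ∂ℙ) * m := by
          apply mul_le_mul_of_nonneg_right _ hm'.le
          exact mul_le_mul_of_nonneg_left hkv hwpos.le
      _ ≤ (∫ ω, ‖A (E ω)‖ ∂ℙ) * m := mul_le_mul_of_nonneg_right hmono hm'.le
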